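/- For every $\delta > 0$ and $a, b > 0$ there exists $t_0 > 0$ such that for all $t \in (0, t_0)$, $\int_0^t \exp\left(-\frac{a}{4s} - \frac{b}{4(t-s)}\right) ds \leq \exp\left(-\frac{(\sqrt{a}+\sqrt{b})^2 - \delta}{4t}\right)$. -/

import Mathlib

open MeasureTheory

lemma key9 (p q u v : ℝ) (hu : 0 < u) (hv : 0 < v) :
    (p + q) ^ 2 / (4 * (u + v)) ≤ p ^ 2 / (4 * u) + q ^ 2 / (4 * v) := by
  rw [div_add_div _ _ (by positivity) (by positivity),
    div_le_div_iff₀ (by positivity) (by positivity)]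
  nlinarith [sq_nonneg (p * v - q * u), mul_pos hu hv, sq_nonneg (p + q)]

theorem stmt9 (δ a b : ℝ) (hδ : 0 < δ) (ha : 0 < a) (hb : 0 < b) :
    ∃ t0 > (0:ℝ), ∀ t ∈ Set.Ioo (0:ℝ) t0,
      ∫ s in (0:ℝ)..t, Real.exp (-(a / (4 * s)) - b / (4 * (t - s))) ≤
        Real.exp (-(((Real.sqrt a + Real.sqrt b) ^ 2 - δ) / (4 * t))) := by
  refine ⟨1, one_pos, fun t ht => ?_⟩
  obtain ⟨ht0, ht1⟩ := ht
  set C := (Real.sqrt a + Real.sqrt b) ^ 2 with hCdef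
  have hae : ∀ᵐ s ∂(volume.restrict (Set.uIoc (0:ℝ) t)),
      ‖Real.exp (-(a / (4 * s)) - b / (4 * (t - s)))‖ ≤ Real.exp (-(C / (4 * t))) := by
    have h1 : ∀ᵐ s : ℝ ∂volume, s ≠ t := by
      rw [MeasureTheory.ae_iff]
      have : {s : ℝ | ¬ s ≠ t} = {t} := by ext x; simp
      rw [this]
      exact measure_singleton t
    filter_upwards [ae_restrict_mem measurableSet_uIoc, ae_restrict_of_ae h1] with s hs hst
    rw [Set.uIoc_of_le ht0.le] at hs
    have hs0 : 0 < s := hs.1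
    have hst' : s < t := lt_of_le_of_ne hs.2 hst
    have hv : 0 < t - s := by linarith
    rw [Real.norm_eq_abs, abs_of_pos (Real.exp_pos _), Real.exp_le_exp]
    have := key9 (Real.sqrt a) (Real.sqrt b) s (t - s) hs0 hv
    rw [Real.sq_sqrt ha.le, Real.sq_sqrt hb.le] at this
    have heq : s + (t - s) = t := by ring
    rw [heq] at this
    linarith
  have hg : IntervalIntegrable (fun _ : ℝ => Real.exp (-(C / (4 * t)))) volume 0 t :=
    intervalIntegrable_const
  have h2 := intervalIntegral.norm_integral_le_abs_of_norm_le hae hg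
  rw [intervalIntegral.integral_const, smul_eq_mul, sub_zero] at h2
  have h3 : ∫ s in (0:ℝ)..t, Real.exp (-(a / (4 * s)) - b / (4 * (t - s))) ≤
      t * Real.exp (-(C / (4 * t))) := by
    calc _ ≤ ‖∫ s in (0:ℝ)..t, Real.exp (-(a / (4 * s)) - b / (4 * (t - s)))‖ :=
          le_abs_self _
      _ ≤ |t * Real.exp (-(C / (4 * t)))| := h2
      _ = t * Real.exp (-(C / (4 * t))) := by
          rw [abs_of_pos (mul_pos ht0 (Real.exp_pos _))]
  refine h3.trans ?_
  have hrw : -((C - δ) / (4 * t)) = δ / (4 * t) + -(C / (4 * t)) := by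
    field_simp
    ring
  rw [hrw, Real.exp_add]
  have ht' : t ≤ Real.exp (δ / (4 * t)) :=
    ht1.le.trans (by simpa using Real.one_le_exp (by positivity))
  exact mul_le_mul_of_nonneg_right ht' (Real.exp_pos _).le
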